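/- Let L be a Lindblad generator on M_d(ℂ). If L admits two distinct stationary density matrices ρ ≠ σ, then L admits two mutually orthogonal stationary density matrices, i.e., stationary density matrices ρ', σ' with ρ'σ' = 0. -/

import Mathlib

open Matrix Filter
open scoped ComplexOrder

variable {d : ℕ}

/-- The Lindblad generator built from `H` and Kraus operators `h`. -/
noncomputable def lindbladOf (H : Matrix (Fin d) (Fin d) ℂ) {n : ℕ}
    (h : Fin n → Matrix (Fin d) (Fin d) ℂ) :
    Matrix (Fin d) (Fin d) ℂ →ₗ[ℂ] Matrix (Fin d) (Fin d) ℂ :=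
  (-Complex.I) • (LinearMap.mulLeft ℂ H - LinearMap.mulRight ℂ H) +
    ∑ α, ((LinearMap.mulLeft ℂ (h α)).comp (LinearMap.mulRight ℂ (h α)ᴴ)
      - ((1 : ℂ)/2) • (LinearMap.mulLeft ℂ ((h α)ᴴ * h α) + LinearMap.mulRight ℂ ((h α)ᴴ * h α)))

lemma lindbladOf_apply (H : Matrix (Fin d) (Fin d) ℂ) {n : ℕ} (h : Fin n → Matrix (Fin d) (Fin d) ℂ)
    (X : Matrix (Fin d) (Fin d) ℂ) :
    lindbladOf H h X = (-Complex.I) • (H * X - X * H) +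
      ∑ α, (h α * (X * (h α)ᴴ) - ((1:ℂ)/2) • ((h α)ᴴ * h α * X + X * ((h α)ᴴ * h α))) := by
  simp [lindbladOf, LinearMap.sum_apply, LinearMap.mulLeft_apply, LinearMap.mulRight_apply,
    mul_assoc]

noncomputable def qForm (v : Fin d → ℂ) : Matrix (Fin d) (Fin d) ℂ →ₗ[ℂ] ℂ where
  toFun A := dotProduct (star v) (A *ᵥ v)
  map_add' A B := by simp [add_mulVec, dotProduct_add]
  map_smul' c A := by simp [smul_mulVec, dotProduct_smul]

lemma star_mul_self_eq_normSq (z : ℂ) : star z * z = (Complex.normSq z : ℂ) := by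
  rw [Complex.star_def, mul_comm, Complex.mul_conj]

lemma qForm_apply (v : Fin d → ℂ) (A : Matrix (Fin d) (Fin d) ℂ) :
    qForm v A = dotProduct (star v) (A *ᵥ v) := rfl

lemma shift_psd (ρ : Matrix (Fin d) (Fin d) ℂ) (hρ : ρ.IsHermitian) (e : ℝ)
    (he : ∀ j, e ≤ hρ.eigenvalues j) : (ρ - (e:ℂ) • 1).PosSemidef := by
  have hU : (hρ.eigenvectorUnitary : Matrix (Fin d) (Fin d) ℂ) *
      star (hρ.eigenvectorUnitary : Matrix (Fin d) (Fin d) ℂ) = 1 :=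
    (Matrix.mem_unitaryGroup_iff).mp hρ.eigenvectorUnitary.2
  have key : ρ - (e:ℂ) • 1 = (hρ.eigenvectorUnitary : Matrix (Fin d) (Fin d) ℂ) *
      diagonal (fun j => ((hρ.eigenvalues j - e : ℝ) : ℂ)) *
      (hρ.eigenvectorUnitary : Matrix (Fin d) (Fin d) ℂ)ᴴ := by
    rw [← star_eq_conjTranspose]
    conv_lhs => rw [hρ.spectral_theorem]
    have h1 : (fun j => ((hρ.eigenvalues j - e : ℝ) : ℂ)) =
        fun j => (Complex.ofReal ∘ hρ.eigenvalues) j - (fun _ : Fin d => (e:ℂ)) j := by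
      funext j; simp
    rw [h1, ← diagonal_sub, mul_sub, sub_mul]
    congr 1
    rw [show (diagonal (fun _ : Fin d => (e:ℂ))) = (e:ℂ) • (1 : Matrix (Fin d) (Fin d) ℂ) by
      ext i j
      by_cases hij : i = j <;> simp [hij, Matrix.diagonal_apply, Matrix.one_apply]]
    rw [mul_smul_comm, mul_one, smul_mul_assoc, hU]
  rw [key]
  refine Matrix.PosSemidef.mul_mul_conjTranspose_same ?_ _
  refine Matrix.PosSemidef.diagonal fun j => ?_
  simp only [Pi.zero_apply]
  rw [Complex.zero_le_real]
  linarith [he j]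

lemma exists_resolvent (H : Matrix (Fin d) (Fin d) ℂ) {n : ℕ}
    (h : Fin n → Matrix (Fin d) (Fin d) ℂ) :
    ∃ s : ℝ, 0 < s ∧ ∀ ρ : Matrix (Fin d) (Fin d) ℂ, ρ.IsHermitian →
      (ρ - (s:ℂ) • lindbladOf H h ρ).PosSemidef → ρ.PosSemidef := by
  classical
  set K : Matrix (Fin d) (Fin d) ℂ := ∑ α, h α * (h α)ᴴ with hKdef
  have hK : K.PosSemidef := by
    refine Finset.sum_induction _ _ (fun a b ha hb => ha.add hb) Matrix.PosSemidef.zero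
      (fun α _ => posSemidef_self_mul_conjTranspose _)
  set κ : Fin d → ℝ := hK.1.eigenvalues with hκdef
  have hκ : ∀ j, 0 ≤ κ j := hK.eigenvalues_nonneg
  set M : ℝ := 1 + ∑ j, κ j with hMdef
  have hM : 0 < M := by
    have : (0:ℝ) ≤ ∑ j, κ j := Finset.sum_nonneg fun j _ => hκ j
    linarith
  refine ⟨M⁻¹, inv_pos.2 hM, ?_⟩
  intro ρ hρ hPSD
  by_contra hnot
  have hex : ∃ i, hρ.eigenvalues i < 0 := by
    by_contra hc; push_neg at hc
    exact hnot (hρ.posSemidef_iff_eigenvalues_nonneg.mpr hc)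
  obtain ⟨i1, hi1⟩ := hex
  obtain ⟨i₀, -, hmin⟩ :=
    Finset.exists_min_image Finset.univ hρ.eigenvalues ⟨i1, Finset.mem_univ _⟩
  set e : ℝ := hρ.eigenvalues i₀ with hedef
  have he : e < 0 := lt_of_le_of_lt (hmin i1 (Finset.mem_univ _)) hi1
  have heC : (e:ℂ) ≤ 0 := by
    rw [show (0:ℂ) = ((0:ℝ):ℂ) by norm_num, Complex.real_le_real]; exact he.le
  set v : Fin d → ℂ := ⇑(hρ.eigenvectorBasis i₀) with hvdef
  have hv : ρ *ᵥ v = (e:ℂ) • v := by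
    have h1 := hρ.mulVec_eigenvectorBasis i₀
    rw [hvdef, h1]
    funext j
    simp [Complex.real_smul, hedef]
  have hvv : dotProduct (star v) v = 1 := by
    have h1 : (inner ℂ (hρ.eigenvectorBasis i₀) (hρ.eigenvectorBasis i₀) : ℂ) = 1 := by
      rw [inner_self_eq_norm_sq_to_K, hρ.eigenvectorBasis.orthonormal.1 i₀]
      norm_num
    rw [EuclideanSpace.inner_eq_star_dotProduct, dotProduct_comm] at h1
    simpa using h1
  have svρ : vecMul (star v) ρ = (e:ℂ) • star v := by
    have h2 : star (ρ *ᵥ v) = star v ᵥ* ρᴴ := star_mulVec ρ v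
    rw [hρ.eq] at h2
    rw [← h2, hv]
    funext j
    simp
  have hshift : (ρ - (e:ℂ) • 1).PosSemidef :=
    shift_psd ρ hρ e (fun j => hmin j (Finset.mem_univ _))
  -- commutator term vanishes
  have qcomm : qForm v (H * ρ - ρ * H) = 0 := by
    have a1 : qForm v (H * ρ) = (e:ℂ) • (star v ⬝ᵥ (H *ᵥ v)) := by
      rw [qForm_apply, ← mulVec_mulVec, hv, mulVec_smul, dotProduct_smul]
    have a2 : qForm v (ρ * H) = (e:ℂ) • (star v ⬝ᵥ (H *ᵥ v)) := by
      rw [qForm_apply, ← mulVec_mulVec, dotProduct_mulVec, svρ, smul_dotProduct]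
    rw [map_sub, a1, a2, sub_self]
  -- Kraus terms
  have kq : ∀ α, qForm v (h α * (ρ * (h α)ᴴ)) =
      dotProduct (star ((h α)ᴴ *ᵥ v)) (ρ *ᵥ ((h α)ᴴ *ᵥ v)) := by
    intro α
    rw [qForm_apply, ← mulVec_mulVec, dotProduct_mulVec]
    rw [show star v ᵥ* h α = star ((h α)ᴴ *ᵥ v) by
      rw [star_mulVec, conjTranspose_conjTranspose]]
    rw [← mulVec_mulVec]
  have klow : ∀ (w : Fin d → ℂ),
      (e:ℂ) * dotProduct (star w) w ≤ dotProduct (star w) (ρ *ᵥ w) := by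
    intro w
    have h3 := hshift.dotProduct_mulVec_nonneg w
    rw [sub_mulVec, dotProduct_sub, smul_mulVec, one_mulVec, dotProduct_smul,
      smul_eq_mul, sub_nonneg] at h3
    exact h3
  have k2 : ∀ α, qForm v ((h α)ᴴ * h α * ρ) = (e:ℂ) * qForm v ((h α)ᴴ * h α) := by
    intro α
    rw [qForm_apply, qForm_apply, ← mulVec_mulVec, hv, mulVec_smul, dotProduct_smul]
    rw [smul_eq_mul]
  have k3 : ∀ α, qForm v (ρ * ((h α)ᴴ * h α)) = (e:ℂ) * qForm v ((h α)ᴴ * h α) := by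
    intro α
    rw [qForm_apply, qForm_apply, ← mulVec_mulVec, dotProduct_mulVec, svρ, smul_dotProduct,
      smul_eq_mul]
  have k4 : ∀ α, 0 ≤ qForm v ((h α)ᴴ * h α) := by
    intro α
    rw [qForm_apply, ← mulVec_mulVec, dotProduct_mulVec, ← star_mulVec]
    exact dotProduct_star_self_nonneg _
  have qρ : qForm v ρ = (e:ℂ) := by
    rw [qForm_apply, hv, dotProduct_smul, hvv, smul_eq_mul, mul_one]
  have qLlow : (e:ℂ) * qForm v K ≤ qForm v (lindbladOf H h ρ) := by
    have expand : qForm v (lindbladOf H h ρ) =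
        ∑ α, (dotProduct (star ((h α)ᴴ *ᵥ v)) (ρ *ᵥ ((h α)ᴴ *ᵥ v))
          - (e:ℂ) * qForm v ((h α)ᴴ * h α)) := by
      rw [lindbladOf_apply, map_add, _root_.map_smul, qcomm, smul_zero, zero_add, map_sum]
      refine Finset.sum_congr rfl fun α _ => ?_
      rw [map_sub, _root_.map_smul, map_add, kq α, k2 α, k3 α, smul_eq_mul]
      ring
    have hKq : qForm v K = ∑ α, dotProduct (star ((h α)ᴴ *ᵥ v)) ((h α)ᴴ *ᵥ v) := by
      rw [hKdef, map_sum]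
      refine Finset.sum_congr rfl fun α _ => ?_
      rw [qForm_apply, ← mulVec_mulVec, dotProduct_mulVec]
      rw [show star v ᵥ* h α = star ((h α)ᴴ *ᵥ v) by
        rw [star_mulVec, conjTranspose_conjTranspose]]
    rw [expand, hKq, Finset.mul_sum]
    refine Finset.sum_le_sum fun α _ => ?_
    have t1 := klow ((h α)ᴴ *ᵥ v)
    have t2 : (e:ℂ) * qForm v ((h α)ᴴ * h α) ≤ 0 := by
      rw [← neg_nonneg, ← neg_mul]
      exact mul_nonneg (neg_nonneg.2 heC) (k4 α)
    calc (e:ℂ) * dotProduct (star ((h α)ᴴ *ᵥ v)) ((h α)ᴴ *ᵥ v)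
        = (e:ℂ) * dotProduct (star ((h α)ᴴ *ᵥ v)) ((h α)ᴴ *ᵥ v) - 0 := by ring
      _ ≤ dotProduct (star ((h α)ᴴ *ᵥ v)) (ρ *ᵥ ((h α)ᴴ *ᵥ v))
          - (e:ℂ) * qForm v ((h α)ᴴ * h α) := sub_le_sub t1 t2
  obtain ⟨creal, hcreal_eq, hcreal_lt⟩ : ∃ c : ℝ, qForm v K = (c:ℂ) ∧ c < M := by
    set V : Matrix (Fin d) (Fin d) ℂ := (hK.1.eigenvectorUnitary : Matrix (Fin d) (Fin d) ℂ)
      with hVdef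
    have hVU : V * star V = 1 := (Matrix.mem_unitaryGroup_iff).mp hK.1.eigenvectorUnitary.2
    have hstar : star v ᵥ* V = star (star V *ᵥ v) := by
      rw [star_mulVec, star_eq_conjTranspose, conjTranspose_conjTranspose]
    have hqK : qForm v K =
        dotProduct (star (star V *ᵥ v))
          (diagonal (RCLike.ofReal ∘ hK.1.eigenvalues) *ᵥ (star V *ᵥ v)) := by
      rw [qForm_apply]
      conv_lhs => rw [hK.1.spectral_theorem, Unitary.conjStarAlgAut_apply]
      rw [← mulVec_mulVec, ← mulVec_mulVec, dotProduct_mulVec, hstar]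
    have hu1 : dotProduct (star (star V *ᵥ v)) (star V *ᵥ v) = 1 := by
      rw [← hstar, dotProduct_mulVec, vecMul_vecMul, hVU, vecMul_one, hvv]
    have hsum1 : ∑ j, Complex.normSq ((star V *ᵥ v) j) = 1 := by
      have h8 : dotProduct (star (star V *ᵥ v)) (star V *ᵥ v) =
          ((∑ j, Complex.normSq ((star V *ᵥ v) j) : ℝ) : ℂ) := by
        rw [dotProduct]
        push_cast
        refine Finset.sum_congr rfl fun j _ => ?_
        simp only [Pi.star_apply]
        rw [star_mul_self_eq_normSq]
      exact_mod_cast h8.symm.trans hu1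
    refine ⟨∑ j, hK.1.eigenvalues j * Complex.normSq ((star V *ᵥ v) j), ?_, ?_⟩
    · rw [hqK, dotProduct]
      push_cast
      refine Finset.sum_congr rfl fun j _ => ?_
      simp only [Pi.star_apply, mulVec_diagonal, Function.comp_apply]
      rw [show star ((star V *ᵥ v) j) *
          ((RCLike.ofReal (hK.1.eigenvalues j) : ℂ) * (star V *ᵥ v) j)
        = (RCLike.ofReal (hK.1.eigenvalues j) : ℂ) *
          (star ((star V *ᵥ v) j) * (star V *ᵥ v) j) from by ring]
      rw [star_mul_self_eq_normSq]
      norm_num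
    · have hb : ∀ j ∈ Finset.univ, hK.1.eigenvalues j * Complex.normSq ((star V *ᵥ v) j)
          ≤ κ j := by
        intro j _
        have hn1 : Complex.normSq ((star V *ᵥ v) j) ≤ 1 := by
          rw [← hsum1]
          exact Finset.single_le_sum (fun i _ => Complex.normSq_nonneg _) (Finset.mem_univ j)
        calc hK.1.eigenvalues j * Complex.normSq ((star V *ᵥ v) j)
            ≤ κ j * 1 := mul_le_mul_of_nonneg_left hn1 (hκ j)
          _ = κ j := mul_one _
      have := Finset.sum_le_sum hb
      have hMe : ∑ j, κ j = M - 1 := by rw [hMdef]; ring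
      calc ∑ j, hK.1.eigenvalues j * Complex.normSq ((star V *ᵥ v) j) ≤ ∑ j, κ j := this
        _ = M - 1 := hMe
        _ < M := by linarith
  have hq0 := hPSD.dotProduct_mulVec_nonneg v
  have hrw : dotProduct (star v) ((ρ - ((M⁻¹:ℝ):ℂ) • lindbladOf H h ρ) *ᵥ v)
      = (e:ℂ) - ((M⁻¹:ℝ):ℂ) * qForm v (lindbladOf H h ρ) := by
    rw [← qForm_apply, map_sub, _root_.map_smul, qρ, smul_eq_mul]
  rw [hrw] at hq0
  have hs0 : (0:ℝ) ≤ M⁻¹ := (inv_pos.2 hM).le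
  have hsC : (0:ℂ) ≤ ((M⁻¹:ℝ):ℂ) := by
    rw [show (0:ℂ)=((0:ℝ):ℂ) by norm_num, Complex.real_le_real]; exact hs0
  have h5 : ((M⁻¹ * (e * creal) : ℝ) : ℂ) ≤ ((M⁻¹:ℝ):ℂ) * qForm v (lindbladOf H h ρ) := by
    have h51 : ((e * creal : ℝ):ℂ) ≤ qForm v (lindbladOf H h ρ) := by
      calc ((e*creal:ℝ):ℂ) = (e:ℂ) * (creal:ℂ) := by push_cast; ring
        _ = (e:ℂ) * qForm v K := by rw [hcreal_eq]
        _ ≤ qForm v (lindbladOf H h ρ) := qLlow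
    calc ((M⁻¹ * (e*creal):ℝ):ℂ) = ((M⁻¹:ℝ):ℂ) * ((e*creal:ℝ):ℂ) := by push_cast; ring
      _ ≤ _ := mul_le_mul_of_nonneg_left h51 hsC
  have h6 : (0:ℂ) ≤ ((e - M⁻¹ * (e * creal) : ℝ):ℂ) := by
    calc (0:ℂ) ≤ (e:ℂ) - ((M⁻¹:ℝ):ℂ) * qForm v (lindbladOf H h ρ) := hq0
      _ ≤ (e:ℂ) - ((M⁻¹ * (e*creal):ℝ):ℂ) := sub_le_sub_left h5 _
      _ = _ := by push_cast; ring
  rw [show (0:ℂ)=((0:ℝ):ℂ) by norm_num, Complex.real_le_real] at h6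
  have h71 : M⁻¹ * creal < 1 := by
    rw [inv_mul_eq_div]; exact (div_lt_one hM).2 hcreal_lt
  have h7 : e * (1 - M⁻¹ * creal) < 0 := mul_neg_of_neg_of_pos he (by linarith)
  have h8 : e - M⁻¹ * (e * creal) = e * (1 - M⁻¹ * creal) := by ring
  linarith

lemma trace_lindbladOf (H : Matrix (Fin d) (Fin d) ℂ) {n : ℕ} (h : Fin n → Matrix (Fin d) (Fin d) ℂ)
    (X : Matrix (Fin d) (Fin d) ℂ) : (lindbladOf H h X).trace = 0 := by
  rw [lindbladOf_apply]
  rw [trace_add, trace_smul, trace_sub, trace_mul_comm, sub_self, smul_zero, zero_add, trace_sum]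
  refine Finset.sum_eq_zero fun α _ => ?_
  have t1 : (h α * (X * (h α)ᴴ)).trace = ((h α)ᴴ * h α * X).trace := by
    rw [← mul_assoc, trace_mul_comm, mul_assoc]
  have t2 : (X * ((h α)ᴴ * h α)).trace = ((h α)ᴴ * h α * X).trace := trace_mul_comm _ _
  rw [trace_sub, trace_smul, trace_add, t1, t2, smul_eq_mul]
  ring

lemma conjTranspose_lindbladOf {H : Matrix (Fin d) (Fin d) ℂ} (hH : H.IsHermitian)
    {n : ℕ} (h : Fin n → Matrix (Fin d) (Fin d) ℂ) (X : Matrix (Fin d) (Fin d) ℂ) :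
    (lindbladOf H h X)ᴴ = lindbladOf H h Xᴴ := by
  rw [lindbladOf_apply, lindbladOf_apply]
  rw [conjTranspose_add]
  congr 1
  · rw [conjTranspose_smul, conjTranspose_sub, conjTranspose_mul, conjTranspose_mul, hH.eq]
    rw [show star (-Complex.I) = Complex.I by simp]
    rw [neg_smul, ← smul_neg, neg_sub]
  · rw [conjTranspose_sum]
    refine Finset.sum_congr rfl fun α _ => ?_
    rw [conjTranspose_sub, conjTranspose_smul, conjTranspose_add]
    congr 1
    · simp [conjTranspose_mul, mul_assoc]
    · rw [show star ((1:ℂ)/2) = (1:ℂ)/2 by simp]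
      congr 1
      simp only [conjTranspose_mul, conjTranspose_conjTranspose]
      rw [add_comm, ← mul_assoc]


lemma star_single (i : Fin d) : star (Pi.single i (1:ℂ)) = (Pi.single i (1:ℂ) : Fin d → ℂ) := by
  funext j
  by_cases hji : j = i <;> simp [hji, Pi.single_apply]

lemma qsingle (A : Matrix (Fin d) (Fin d) ℂ) (i : Fin d) :
    dotProduct (star (Pi.single i (1:ℂ))) (A *ᵥ Pi.single i (1:ℂ)) = A i i := by
  rw [star_single, single_dotProduct, mulVec_single]
  simp

lemma psd_diag_nonneg {A : Matrix (Fin d) (Fin d) ℂ} (hA : A.PosSemidef) (i : Fin d) :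
    0 ≤ A i i := by
  have := hA.dotProduct_mulVec_nonneg (Pi.single i 1)
  rwa [qsingle] at this

lemma psd_col_zero {A : Matrix (Fin d) (Fin d) ℂ} (hA : A.PosSemidef) (i : Fin d)
    (hii : A i i = 0) : ∀ j, A j i = 0 ∧ A i j = 0 := by
  have h0 : dotProduct (star (Pi.single i (1:ℂ))) (A *ᵥ Pi.single i (1:ℂ)) = 0 := by
    rw [qsingle, hii]
  have hcol := (hA.dotProduct_mulVec_zero_iff (Pi.single i 1)).1 h0
  intro j
  have h1 : A j i = 0 := by
    have := congrFun hcol j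
    rw [mulVec_single] at this
    simpa using this
  refine ⟨h1, ?_⟩
  have h2 : A i j = star (A j i) := by
    conv_lhs => rw [← hA.1.eq]
    simp [conjTranspose_apply]
  rw [h2, h1, star_zero]

lemma psd_smul_real {A : Matrix (Fin d) (Fin d) ℂ} (hA : A.PosSemidef) {c : ℝ} (hc : 0 ≤ c) :
    ((c:ℂ) • A).PosSemidef := by
  refine Matrix.PosSemidef.of_dotProduct_mulVec_nonneg ?_ ?_
  · show _ᴴ = _
    rw [conjTranspose_smul, hA.1.eq]
    congr 1
    simp [Complex.star_def]
  · intro x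
    rw [smul_mulVec, dotProduct_smul, smul_eq_mul]
    refine mul_nonneg ?_ (hA.dotProduct_mulVec_nonneg x)
    rw [show (0:ℂ)=((0:ℝ):ℂ) by norm_num, Complex.real_le_real]
    exact hc

lemma psd_eq_real_diag {A : Matrix (Fin d) (Fin d) ℂ} (hA : A.PosSemidef) (i : Fin d) :
    A i i = ((A i i).re : ℂ) := by
  have h := psd_diag_nonneg hA i
  rw [Complex.le_def] at h
  apply Complex.ext
  · simp
  · simp [← h.2]

lemma key_lemma {H : Matrix (Fin d) (Fin d) ℂ} (hH : H.IsHermitian) {n : ℕ}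
    (h : Fin n → Matrix (Fin d) (Fin d) ℂ) {Δ : Matrix (Fin d) (Fin d) ℂ}
    (hΔ : Δ.IsHermitian) (hLΔ : lindbladOf H h Δ = 0) (hΔtr : Δ.trace = 0) (hΔne : Δ ≠ 0) :
    ∃ P Q : Matrix (Fin d) (Fin d) ℂ, P.PosSemidef ∧ Q.PosSemidef ∧ P.trace = 1 ∧ Q.trace = 1 ∧
      lindbladOf H h P = 0 ∧ lindbladOf H h Q = 0 ∧ P * Q = 0 := by
  classical
  obtain ⟨s, hs, hres⟩ := exists_resolvent H h
  set T : Matrix (Fin d) (Fin d) ℂ →ₗ[ℂ] Matrix (Fin d) (Fin d) ℂ :=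
    LinearMap.id - (s:ℂ) • lindbladOf H h with hTdef
  have hT_apply : ∀ X, T X = X - (s:ℂ) • lindbladOf H h X := fun X => rfl
  have hT_herm : ∀ X, (T X)ᴴ = T Xᴴ := by
    intro X
    rw [hT_apply, hT_apply, conjTranspose_sub, conjTranspose_smul, conjTranspose_lindbladOf hH]
    congr 2
    simp [Complex.star_def]
  have hT_psd : ∀ X, X.IsHermitian → (T X).PosSemidef → X.PosSemidef := by
    intro X hX hP
    exact hres X hX (by rw [← hT_apply]; exact hP)
  have herm_zero : ∀ Z : Matrix (Fin d) (Fin d) ℂ, Z.IsHermitian → T Z = 0 → Z = 0 := by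
    intro Z hZ hZ0
    have p1 : Z.PosSemidef := hT_psd Z hZ (by rw [hZ0]; exact .zero)
    have p2 : (-Z).PosSemidef := by
      refine hT_psd (-Z) ?_ (by rw [map_neg, hZ0, neg_zero]; exact .zero)
      show _ᴴ = _
      rw [conjTranspose_neg, hZ.eq]
    have hq : ∀ x, dotProduct (star x) (Z *ᵥ x) = 0 := by
      intro x
      refine le_antisymm ?_ (p1.dotProduct_mulVec_nonneg x)
      have h2 := p2.dotProduct_mulVec_nonneg x
      rw [neg_mulVec, dotProduct_neg, ← neg_zero, neg_le_neg_iff] at h2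
      exact h2
    have hZx : ∀ x, Z *ᵥ x = 0 := fun x => (p1.dotProduct_mulVec_zero_iff x).1 (hq x)
    ext i j
    have := congrFun (hZx (Pi.single j 1)) i
    rw [mulVec_single] at this
    simpa using this
  have hT_inj : Function.Injective T := by
    intro X Y hXY
    have hW : T (X - Y) = 0 := by rw [map_sub, hXY, sub_self]
    set W := X - Y with hWdef
    have hWH : T Wᴴ = 0 := by rw [← hT_herm, hW, conjTranspose_zero]
    have h1 : T (W + Wᴴ) = 0 := by rw [map_add, hW, hWH, add_zero]
    have h2 : T ((-Complex.I) • (W - Wᴴ)) = 0 := by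
      rw [_root_.map_smul, map_sub, hW, hWH, sub_self, smul_zero]
    have e1 : (W + Wᴴ).IsHermitian := by
      show _ᴴ = _
      rw [conjTranspose_add, conjTranspose_conjTranspose, add_comm]
    have e2 : ((-Complex.I) • (W - Wᴴ)).IsHermitian := by
      show _ᴴ = _
      rw [conjTranspose_smul, conjTranspose_sub, conjTranspose_conjTranspose]
      rw [show star (-Complex.I) = Complex.I by simp]
      rw [neg_smul, ← smul_neg, neg_sub]
    have z1 := herm_zero _ e1 h1
    have z2 := herm_zero _ e2 h2
    have z2' : W - Wᴴ = 0 := by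
      have h3 : (Complex.I) • ((-Complex.I) • (W - Wᴴ)) = W - Wᴴ := by
        rw [smul_smul]
        simp
      rw [← h3, z2, smul_zero]
    have h4 : (2:ℂ) • W = 0 := by
      have : (2:ℂ) • W = (W + Wᴴ) + (W - Wᴴ) := by
        rw [two_smul]; abel
      rw [this, z1, z2', add_zero]
    have h5 : W = 0 := by
      have := smul_eq_zero.1 h4
      rcases this with h | h
      · norm_num at h
      · exact h
    rw [hWdef] at h5
    exact sub_eq_zero.1 h5
  have hT_surj : Function.Surjective T := LinearMap.injective_iff_surjective.1 hT_inj
  -- spectral data of Δ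
  set U : Matrix (Fin d) (Fin d) ℂ := (hΔ.eigenvectorUnitary : Matrix (Fin d) (Fin d) ℂ)
    with hUdef
  have hUU : U * star U = 1 := (Matrix.mem_unitaryGroup_iff).mp hΔ.eigenvectorUnitary.2
  have hUU' : star U * U = 1 := (Matrix.mem_unitaryGroup_iff').mp hΔ.eigenvectorUnitary.2
  set e : Fin d → ℝ := hΔ.eigenvalues with hedef
  set ep : Fin d → ℝ := fun i => max (e i) 0 with hepdef
  set em : Fin d → ℝ := fun i => max (-(e i)) 0 with hemdef
  have hep : ∀ i, 0 ≤ ep i := fun i => le_max_right _ _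
  have hem : ∀ i, 0 ≤ em i := fun i => le_max_right _ _
  have hsplitfun : ∀ i, ep i - em i = e i := by
    intro i
    rcases le_total (e i) 0 with hle | hle
    · rw [hepdef, hemdef]
      simp only [max_eq_right hle, max_eq_left (neg_nonneg.2 hle)]
      ring
    · rw [hepdef, hemdef]
      simp only [max_eq_left hle, max_eq_right (neg_nonpos.2 hle)]
      ring
  set Dp : Matrix (Fin d) (Fin d) ℂ := diagonal (fun i => (ep i : ℂ)) with hDpdef
  set Dm : Matrix (Fin d) (Fin d) ℂ := diagonal (fun i => (em i : ℂ)) with hDmdef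
  set Δp : Matrix (Fin d) (Fin d) ℂ := U * Dp * star U with hΔpdef
  set Δm : Matrix (Fin d) (Fin d) ℂ := U * Dm * star U with hΔmdef
  have hspec : Δ = U * diagonal (fun i => (e i : ℂ)) * star U := by
    have := hΔ.spectral_theorem
    rw [Unitary.conjStarAlgAut_apply] at this
    exact this
  have hDsub : Dp - Dm = diagonal (fun i => (e i : ℂ)) := by
    rw [hDpdef, hDmdef, diagonal_sub]
    have hfe : (fun i => (ep i:ℂ) - (em i:ℂ)) = fun i => (e i:ℂ) := by
      funext i
      rw [← hsplitfun i]
      push_cast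
      ring
    rw [hfe]
  have hsplit : Δp - Δm = Δ := by
    rw [hΔpdef, hΔmdef, hspec, ← sub_mul, ← mul_sub, hDsub]
  have hdiagPSD : ∀ f : Fin d → ℝ, (∀ i, 0 ≤ f i) →
      (U * diagonal (fun i => (f i : ℂ)) * star U).PosSemidef := by
    intro f hf
    rw [star_eq_conjTranspose]
    refine Matrix.PosSemidef.mul_mul_conjTranspose_same ?_ U
    refine Matrix.PosSemidef.diagonal fun i => ?_
    simp only [Pi.zero_apply]
    rw [Complex.zero_le_real]
    exact hf i
  have hΔpPSD : Δp.PosSemidef := hdiagPSD ep hep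
  have hΔmPSD : Δm.PosSemidef := hdiagPSD em hem
  have htrconj : ∀ X : Matrix (Fin d) (Fin d) ℂ, (U * X * star U).trace = X.trace := by
    intro X
    rw [trace_mul_cycle, hUU', one_mul]
  have htrΔp : Δp.trace = ((∑ i, ep i : ℝ) : ℂ) := by
    rw [hΔpdef, htrconj, hDpdef, trace_diagonal]
    push_cast
    rfl
  have htrΔm : Δm.trace = ((∑ i, em i : ℝ) : ℂ) := by
    rw [hΔmdef, htrconj, hDmdef, trace_diagonal]
    push_cast
    rfl
  have htre : ∑ i, e i = 0 := by
    have h1 : Δ.trace = ((∑ i, e i : ℝ) : ℂ) := by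
      rw [hspec, htrconj, trace_diagonal]
      push_cast
      rfl
    rw [hΔtr] at h1
    exact_mod_cast h1.symm
  set tp : ℝ := ∑ i, ep i with htpdef
  set tm : ℝ := ∑ i, em i with htmdef
  have htptm : tp = tm := by
    have h1 : tp - tm = ∑ i, e i := by
      rw [htpdef, htmdef, ← Finset.sum_sub_distrib]
      exact Finset.sum_congr rfl fun i _ => hsplitfun i
    rw [htre] at h1
    linarith
  have htp_pos : 0 < tp := by
    have hei : ∃ i, e i ≠ 0 := by
      by_contra hc
      push_neg at hc
      apply hΔne
      rw [hspec]
      rw [show (diagonal (fun i => (e i:ℂ))) = 0 by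
        rw [show (fun i => (e i:ℂ)) = fun _ => (0:ℂ) by funext i; rw [hc i]; norm_num]
        exact diagonal_zero]
      rw [mul_zero, zero_mul]
    obtain ⟨i, hi⟩ := hei
    rcases lt_or_gt_of_ne hi with hlt | hgt
    · have h1 : 0 < em i := by rw [hemdef]; simp; linarith
      have h2 : em i ≤ tm :=
        Finset.single_le_sum (fun j _ => hem j) (Finset.mem_univ i)
      rw [htptm]; linarith
    · have h1 : 0 < ep i := by rw [hepdef]; simp; linarith
      have h2 : ep i ≤ tp :=
        Finset.single_le_sum (fun j _ => hep j) (Finset.mem_univ i)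
      linarith
  -- preimages under T
  obtain ⟨A, hTA⟩ := hT_surj Δp
  obtain ⟨B, hTB⟩ := hT_surj Δm
  have hTΔ : T Δ = Δ := by rw [hT_apply, hLΔ, smul_zero, sub_zero]
  have hAherm : A.IsHermitian := by
    show _ᴴ = _
    refine hT_inj ?_
    rw [← hT_herm, hTA, hΔpPSD.1.eq]
  have hBherm : B.IsHermitian := by
    show _ᴴ = _
    refine hT_inj ?_
    rw [← hT_herm, hTB, hΔmPSD.1.eq]
  have hAPSD : A.PosSemidef := hT_psd A hAherm (by rw [hTA]; exact hΔpPSD)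
  have hBPSD : B.PosSemidef := hT_psd B hBherm (by rw [hTB]; exact hΔmPSD)
  have hAB : A - B = Δ := by
    refine hT_inj ?_
    rw [map_sub, hTA, hTB, hsplit, hTΔ]
  have htrT : ∀ X : Matrix (Fin d) (Fin d) ℂ, (T X).trace = X.trace := by
    intro X
    rw [hT_apply, trace_sub, trace_smul, trace_lindbladOf, smul_zero, sub_zero]
  have htrA : A.trace = ((tp:ℝ) : ℂ) := by
    rw [← htrT A, hTA, htrΔp]
  -- conjugate A to the eigenbasis
  set A' : Matrix (Fin d) (Fin d) ℂ := star U * A * U with hA'def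
  have hA'PSD : A'.PosSemidef := by
    rw [hA'def, star_eq_conjTranspose]
    exact hAPSD.conjTranspose_mul_mul_same U
  have hBD : A' - diagonal (fun i => (e i:ℂ)) = star U * B * U := by
    have h1 : star U * Δ * U = diagonal (fun i => (e i:ℂ)) := by
      rw [hspec]
      rw [show star U * ((U * diagonal fun i => ((e i):ℂ)) * star U) * U
          = (star U * U) * diagonal (fun i => ((e i):ℂ)) * (star U * U) by
        simp only [mul_assoc]]
      rw [hUU', one_mul, mul_one]
    rw [← h1, hA'def, ← hAB]
    noncomm_ring
  have hBDPSD : (A' - diagonal (fun i => (e i:ℂ))).PosSemidef := by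
    rw [hBD, star_eq_conjTranspose]
    exact hBPSD.conjTranspose_mul_mul_same U
  have htrA' : A'.trace = ((tp:ℝ):ℂ) := by
    rw [hA'def, trace_mul_cycle, hUU, one_mul, htrA]
  -- diagonal entries
  have hdiag_lb : ∀ i, ep i ≤ (A' i i).re := by
    intro i
    have h1 : (0:ℝ) ≤ (A' i i).re := by
      have h1a := psd_diag_nonneg hA'PSD i
      rw [Complex.le_def] at h1a
      simpa using h1a.1
    have h2 : e i ≤ (A' i i).re := by
      have h2a := psd_diag_nonneg hBDPSD i
      have h3 : ((A' - diagonal (fun i => (e i:ℂ))) i i) = A' i i - (e i : ℂ) := by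
        simp [Matrix.sub_apply]
      rw [h3, Complex.le_def] at h2a
      have h2b := h2a.1
      simp only [Complex.sub_re, Complex.ofReal_re, Complex.zero_re] at h2b
      linarith
    rw [hepdef]
    exact max_le h2 h1
  have hsum_diag : ∑ i, (A' i i).re = tp := by
    have h1 : (A'.trace).re = tp := by rw [htrA']; simp
    rw [← h1]
    rw [Matrix.trace]
    rw [Complex.re_sum]
    rfl
  have hdiag_eq : ∀ i, (A' i i).re = ep i := by
    intro i
    by_contra hne
    have hlt : ep i < (A' i i).re := lt_of_le_of_ne (hdiag_lb i) (Ne.symm hne)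
    have hstrict : ∑ j, ep j < ∑ j, (A' j j).re :=
      Finset.sum_lt_sum (fun j _ => hdiag_lb j) ⟨i, Finset.mem_univ i, hlt⟩
    rw [hsum_diag, ← htpdef] at hstrict
    exact lt_irrefl _ hstrict
  have hA'Dp : A' = Dp := by
    have hDp_apply : ∀ i j, Dp i j = if i = j then ((ep i:ℝ):ℂ) else 0 := by
      intro i j
      rw [hDpdef, diagonal_apply]
    ext i j
    rcases le_or_gt (e j) 0 with hj | hj
    · have hepj : ep j = 0 := by simp [hepdef, max_eq_right hj]
      have hjj : A' j j = 0 := by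
        rw [psd_eq_real_diag hA'PSD j, hdiag_eq j, hepj]
        norm_num
      have hzero := (psd_col_zero hA'PSD j hjj i).1
      rw [hzero, hDp_apply]
      by_cases hij : i = j
      · subst hij
        rw [if_pos rfl, hepj]
        norm_num
      · rw [if_neg hij]
    · have hepj : ep j = e j := by simp [hepdef, max_eq_left hj.le]
      have hjj : (A' - diagonal (fun k => (e k:ℂ))) j j = 0 := by
        rw [Matrix.sub_apply, diagonal_apply_eq, psd_eq_real_diag hA'PSD j, hdiag_eq j, hepj]
        ring
      have hcol := (psd_col_zero hBDPSD j hjj i).1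
      rw [Matrix.sub_apply] at hcol
      by_cases hij : i = j
      · subst hij
        rw [diagonal_apply_eq] at hcol
        rw [sub_eq_zero.1 hcol, hDp_apply, if_pos rfl, hepj]
      · rw [diagonal_apply_ne _ hij] at hcol
        rw [hDp_apply, if_neg hij]
        simpa using hcol
  have hAeq : A = Δp := by
    have h5 : U * A' * star U = A := by
      rw [hA'def]
      rw [show U * (star U * A * U) * star U = (U * star U) * A * (U * star U) by
        simp only [mul_assoc]]
      rw [hUU, one_mul, mul_one]
    rw [← h5, hA'Dp, hΔpdef]
  have hLΔp : lindbladOf H h Δp = 0 := by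
    rw [hAeq] at hTA
    rw [hT_apply] at hTA
    have h2 : (s:ℂ) • lindbladOf H h Δp = 0 := by
      have := sub_eq_self.1 hTA
      exact this
    rcases smul_eq_zero.1 h2 with h3 | h3
    · exact absurd h3 (Complex.ofReal_ne_zero.2 (ne_of_gt hs))
    · exact h3
  have hLΔm : lindbladOf H h Δm = 0 := by
    have h6 : Δm = Δp - Δ := by rw [← hsplit]; abel
    rw [h6, map_sub, hLΔp, hLΔ, sub_zero]
  have hprod : Δp * Δm = 0 := by
    rw [hΔpdef, hΔmdef]
    rw [show U * Dp * star U * (U * Dm * star U) = U * (Dp * (star U * U) * Dm) * star U by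
      simp only [mul_assoc]]
    rw [hUU', mul_one, hDpdef, hDmdef, diagonal_mul_diagonal]
    rw [show (fun i => (ep i:ℂ) * (em i:ℂ)) = fun _ => (0:ℂ) by
      funext i
      rcases le_total (e i) 0 with hle | hle
      · rw [hepdef]
        simp [max_eq_right hle]
      · rw [hemdef]
        simp [max_eq_right (neg_nonpos.2 hle)]]
    rw [diagonal_zero, mul_zero, zero_mul]
  have htmpos : 0 < tm := htptm ▸ htp_pos
  refine ⟨((tp:ℝ):ℂ)⁻¹ • Δp, ((tm:ℝ):ℂ)⁻¹ • Δm, ?_, ?_, ?_, ?_, ?_, ?_, ?_⟩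
  · rw [show ((tp:ℝ):ℂ)⁻¹ = ((tp⁻¹:ℝ):ℂ) by push_cast; ring]
    exact psd_smul_real hΔpPSD (inv_nonneg.2 htp_pos.le)
  · rw [show ((tm:ℝ):ℂ)⁻¹ = ((tm⁻¹:ℝ):ℂ) by push_cast; ring]
    exact psd_smul_real hΔmPSD (inv_nonneg.2 htmpos.le)
  · rw [trace_smul, htrΔp, smul_eq_mul, inv_mul_cancel₀]
    exact Complex.ofReal_ne_zero.2 (ne_of_gt htp_pos)
  · rw [trace_smul, htrΔm, smul_eq_mul, inv_mul_cancel₀]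
    exact Complex.ofReal_ne_zero.2 (ne_of_gt htmpos)
  · rw [_root_.map_smul, hLΔp, smul_zero]
  · rw [_root_.map_smul, hLΔm, smul_zero]
  · rw [smul_mul_assoc, mul_smul_comm, hprod, smul_zero, smul_zero]


/-- `L` is a Lindblad generator. -/
def IsLindblad (L : Matrix (Fin d) (Fin d) ℂ →ₗ[ℂ] Matrix (Fin d) (Fin d) ℂ) : Prop :=
  ∃ (H : Matrix (Fin d) (Fin d) ℂ) (n : ℕ) (h : Fin n → Matrix (Fin d) (Fin d) ℂ),
    H.IsHermitian ∧ L = lindbladOf H h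

/-- `ρ` is a stationary density matrix of `L`. -/
def IsStationaryState (L : Matrix (Fin d) (Fin d) ℂ →ₗ[ℂ] Matrix (Fin d) (Fin d) ℂ)
    (ρ : Matrix (Fin d) (Fin d) ℂ) : Prop :=
  ρ.PosSemidef ∧ ρ.trace = 1 ∧ L ρ = 0

theorem stmt5 (d : ℕ) (hd : 1 ≤ d)
    (L : Matrix (Fin d) (Fin d) ℂ →ₗ[ℂ] Matrix (Fin d) (Fin d) ℂ) (hL : IsLindblad L)
    (ρ σ : Matrix (Fin d) (Fin d) ℂ) (hρ : IsStationaryState L ρ)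
    (hσ : IsStationaryState L σ) (hne : ρ ≠ σ) :
    ∃ ρ' σ' : Matrix (Fin d) (Fin d) ℂ,
      IsStationaryState L ρ' ∧ IsStationaryState L σ' ∧ ρ' * σ' = 0 := by
  obtain ⟨H, n, h, hH, rfl⟩ := hL
  obtain ⟨hρP, hρtr, hρL⟩ := hρ
  obtain ⟨hσP, hσtr, hσL⟩ := hσ
  have hΔ : (ρ - σ).IsHermitian := hρP.1.sub hσP.1
  have hLΔ : lindbladOf H h (ρ - σ) = 0 := by rw [map_sub, hρL, hσL, sub_zero]
  have htr : (ρ - σ).trace = 0 := by rw [trace_sub, hρtr, hσtr, sub_self]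
  have hne0 : ρ - σ ≠ 0 := sub_ne_zero.2 hne
  obtain ⟨P, Q, hP, hQ, hPtr, hQtr, hLP, hLQ, hPQ⟩ := key_lemma hH h hΔ hLΔ htr hne0
  exact ⟨P, Q, ⟨hP, hPtr, hLP⟩, ⟨hQ, hQtr, hLQ⟩, hPQ⟩
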